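/- For positive reals λ_BS, λ_e, D₀ and α > 0: ∫₀^∞ [1/(1 + (λ_e/λ_BS)·2^{2t/α})]·(1 - exp[-π(λ_e + λ_BS·2^{-2t/α})·D₀²]) dt = (α/(2 ln 2))·[ln((λ_BS + λ_e)/λ_e) - E₁(πλ_e D₀²) + E₁(π(λ_e + λ_BS)D₀²)], where E₁(x) = ∫ₓ^∞ e^{-t}/t dt. -/

import Mathlib

open MeasureTheory Real Set Filter Topology

noncomputable def expIntegralE1 (x : ℝ) : ℝ := ∫ t in Set.Ioi x, Real.exp (-t) / t

lemma E1_integrableOn {x : ℝ} (hx : 0 < x) :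
    IntegrableOn (fun t => Real.exp (-t) / t) (Ioi x) := by
  have hmeas : AEStronglyMeasurable (fun t => Real.exp (-t) / t)
      (volume.restrict (Ioi x)) := by
    refine (ContinuousOn.aestronglyMeasurable ?_ measurableSet_Ioi)
    exact ((continuous_exp.comp continuous_neg).continuousOn).div continuousOn_id
      (fun t ht => ne_of_gt (hx.trans ht))
  refine Integrable.mono' ((exp_neg_integrableOn_Ioi x one_pos).const_mul x⁻¹) hmeas ?_
  filter_upwards [ae_restrict_mem measurableSet_Ioi] with t ht
  have ht0 : 0 < t := hx.trans ht
  rw [Real.norm_of_nonneg (by positivity), neg_one_mul, div_eq_mul_inv, mul_comm]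
  have h1 : Real.exp (-t) * t⁻¹ ≤ Real.exp (-t) * x⁻¹ :=
    mul_le_mul_of_nonneg_left (inv_anti₀ hx ht.le) (exp_pos _).le
  linarith [mul_comm (Real.exp (-t)) x⁻¹ ▸ h1]

lemma E1_split {x y : ℝ} (hx : 0 < x) (hy : 0 < y) :
    expIntegralE1 x = (∫ t in x..y, Real.exp (-t) / t) + expIntegralE1 y := by
  have key : ∀ a b : ℝ, 0 < a → a ≤ b →
      expIntegralE1 a = (∫ t in Ioc a b, Real.exp (-t) / t) + expIntegralE1 b := by
    intro a b ha hab
    have : Ioi a = Ioc a b ∪ Ioi b := (Ioc_union_Ioi_eq_Ioi hab).symm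
    rw [expIntegralE1, this, setIntegral_union (Ioc_disjoint_Ioi le_rfl) measurableSet_Ioi
      ((E1_integrableOn ha).mono (by rw [this]; exact subset_union_left) le_rfl)
      (E1_integrableOn (ha.trans_le hab))]
    rfl
  rcases le_total x y with h | h
  · rw [intervalIntegral.integral_of_le h]; exact key x y hx h
  · rw [intervalIntegral.integral_symm, intervalIntegral.integral_of_le h]
    have := key y x hy h
    linarith

lemma E1_hasDerivAt {x : ℝ} (hx : 0 < x) :
    HasDerivAt expIntegralE1 (-(Real.exp (-x) / x)) x := by
  have hF : HasDerivAt (fun y => expIntegralE1 x - ∫ t in x..y, Real.exp (-t) / t)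
      (-(Real.exp (-x) / x)) x := by
    have hint : IntervalIntegrable (fun t => Real.exp (-t) / t) volume x x := by
      simp [IntervalIntegrable]
    have hca : ContinuousAt (fun t => Real.exp (-t) / t) x :=
      (continuous_exp.comp continuous_neg).continuousAt.div continuousAt_id (ne_of_gt hx)
    have hsm : StronglyMeasurableAtFilter (fun t => Real.exp (-t) / t) (𝓝 x) volume :=
      ContinuousAt.stronglyMeasurableAtFilter isOpen_Ioi
        (fun y hy => (continuous_exp.comp continuous_neg).continuousAt.div continuousAt_id
          (ne_of_gt hy)) x hx
    have := intervalIntegral.integral_hasDerivAt_right hint hsm hca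
    simpa using (this.const_sub (expIntegralE1 x))
  refine hF.congr_of_eventuallyEq ?_
  filter_upwards [isOpen_Ioi.mem_nhds (show x ∈ Ioi (0:ℝ) from hx)] with y hy
  have := E1_split hx (show (0:ℝ) < y from hy)
  linarith

theorem stmt_9 (lBS le D₀ α : ℝ) (hBS : 0 < lBS) (he : 0 < le) (hD : 0 < D₀)
    (hα : 0 < α) :
    ∫ t in Set.Ioi (0:ℝ),
      (1 / (1 + (le / lBS) * (2:ℝ) ^ (2 * t / α))) *
        (1 - Real.exp (-(π * (le + lBS * (2:ℝ) ^ (-(2 * t / α))) * D₀ ^ 2)))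
    = α / (2 * Real.log 2) *
        (Real.log ((lBS + le) / le) - expIntegralE1 (π * le * D₀ ^ 2)
          + expIntegralE1 (π * (le + lBS) * D₀ ^ 2)) := by
  have hl2 : 0 < Real.log 2 := Real.log_pos one_lt_two
  set k : ℝ := 2 * Real.log 2 / α with hk_def
  have hk : 0 < k := by positivity
  set v : ℝ → ℝ := fun t => π * (le + lBS * Real.exp (-(k * t))) * D₀ ^ 2 with hv_def
  have hv_pos : ∀ t, 0 < v t := by
    intro t
    have : 0 < Real.exp (-(k * t)) := exp_pos _
    have : 0 < le + lBS * Real.exp (-(k * t)) := by positivity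
    rw [hv_def]; positivity
  have hvd : ∀ t : ℝ, HasDerivAt v (π * (lBS * (Real.exp (-(k * t)) * (-k))) * D₀ ^ 2) t := by
    intro t
    have h1 : HasDerivAt (fun t : ℝ => -(k * t)) (-k) t := by
      have h0 := ((hasDerivAt_id t).const_mul k).neg
      simp only [id, mul_one] at h0
      exact h0
    exact (((h1.exp.const_mul lBS).const_add le).const_mul π).mul_const _
  set F : ℝ → ℝ := fun t => -(α / (2 * Real.log 2)) * (Real.log (v t) + expIntegralE1 (v t))
    with hF_def
  -- rpow to exp conversions
  have h2pow : ∀ t : ℝ, (2:ℝ) ^ (2 * t / α) = Real.exp (k * t) := by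
    intro t
    rw [Real.rpow_def_of_pos two_pos]
    congr 1
    rw [hk_def]; ring
  have h2pow' : ∀ t : ℝ, (2:ℝ) ^ (-(2 * t / α)) = Real.exp (-(k * t)) := by
    intro t
    rw [Real.rpow_def_of_pos two_pos]
    congr 1
    rw [hk_def]; ring
  -- derivative of F is the integrand
  have hderiv : ∀ t ∈ Ici (0:ℝ), HasDerivAt F
      ((1 / (1 + (le / lBS) * (2:ℝ) ^ (2 * t / α))) *
        (1 - Real.exp (-(π * (le + lBS * (2:ℝ) ^ (-(2 * t / α))) * D₀ ^ 2)))) t := by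
    intro t _
    have hlog : HasDerivAt (fun s => Real.log (v s))
        ((π * (lBS * (Real.exp (-(k * t)) * (-k))) * D₀ ^ 2) / v t) t :=
      (hvd t).log (ne_of_gt (hv_pos t))
    have hE : HasDerivAt (fun s => expIntegralE1 (v s))
        ((-(Real.exp (-(v t)) / v t)) * (π * (lBS * (Real.exp (-(k * t)) * (-k))) * D₀ ^ 2)) t :=
      (E1_hasDerivAt (hv_pos t)).comp t (hvd t)
    have hd := (hlog.add hE).const_mul (-(α / (2 * Real.log 2)))
    convert hd using 1
    · rfl
    · rfl
    · rfl
    rw [h2pow, h2pow']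
    have hx0 : (0:ℝ) < Real.exp (k * t) := exp_pos _
    have hEX : Real.exp (-(k * t)) = (Real.exp (k * t))⁻¹ := by
      rw [← Real.exp_neg]
    show _ = -(α / (2 * Real.log 2)) * _
    rw [hv_def]
    simp only []
    rw [hEX, hk_def]
    have hvne : π * (le + lBS * (Real.exp (k * t))⁻¹) * D₀ ^ 2 ≠ 0 := by
      have := hv_pos t
      rw [hv_def] at this; simp only [] at this; rw [hEX] at this
      exact ne_of_gt this
    field_simp
    ring
  -- integrability of the integrand
  have hint : IntegrableOn (fun t =>
      (1 / (1 + (le / lBS) * (2:ℝ) ^ (2 * t / α))) *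
        (1 - Real.exp (-(π * (le + lBS * (2:ℝ) ^ (-(2 * t / α))) * D₀ ^ 2)))) (Ioi (0:ℝ)) := by
    have hcont : Continuous (fun t =>
        (1 / (1 + (le / lBS) * (2:ℝ) ^ (2 * t / α))) *
          (1 - Real.exp (-(π * (le + lBS * (2:ℝ) ^ (-(2 * t / α))) * D₀ ^ 2)))) := by
      have c1 : Continuous fun t : ℝ => (2:ℝ) ^ (2 * t / α) := by
        simp only [h2pow]; fun_prop
      have c2 : Continuous fun t : ℝ => (2:ℝ) ^ (-(2 * t / α)) := by
        simp only [h2pow']; fun_prop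
      have hne : ∀ t : ℝ, 1 + (le / lBS) * (2:ℝ) ^ (2 * t / α) ≠ 0 := by
        intro t
        have : (0:ℝ) < (2:ℝ) ^ (2 * t / α) := rpow_pos_of_pos two_pos _
        positivity
      exact ((continuous_const.div (by fun_prop) hne)).mul (by fun_prop)
    refine Integrable.mono' ((exp_neg_integrableOn_Ioi 0 hk).const_mul (lBS / le))
      hcont.aestronglyMeasurable ?_
    filter_upwards [ae_restrict_mem measurableSet_Ioi] with t _
    rw [h2pow, h2pow']
    have hx0 : (0:ℝ) < Real.exp (k * t) := exp_pos _
    have hvpos : 0 < π * (le + lBS * Real.exp (-(k * t))) * D₀ ^ 2 := by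
      have := exp_pos (-(k * t)); positivity
    have hB0 : 0 ≤ 1 - Real.exp (-(π * (le + lBS * Real.exp (-(k * t))) * D₀ ^ 2)) := by
      have : Real.exp (-(π * (le + lBS * Real.exp (-(k * t))) * D₀ ^ 2)) ≤ Real.exp 0 :=
        Real.exp_le_exp.mpr (by linarith)
      rw [Real.exp_zero] at this; linarith
    have hB1 : 1 - Real.exp (-(π * (le + lBS * Real.exp (-(k * t))) * D₀ ^ 2)) ≤ 1 := by
      have := exp_pos (-(π * (le + lBS * Real.exp (-(k * t))) * D₀ ^ 2)); linarith
    have hden : 0 < 1 + (le / lBS) * Real.exp (k * t) := by positivity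
    have hA0 : 0 ≤ 1 / (1 + (le / lBS) * Real.exp (k * t)) := by positivity
    rw [Real.norm_of_nonneg (mul_nonneg hA0 hB0)]
    calc (1 / (1 + (le / lBS) * Real.exp (k * t))) *
          (1 - Real.exp (-(π * (le + lBS * Real.exp (-(k * t))) * D₀ ^ 2)))
        ≤ (1 / (1 + (le / lBS) * Real.exp (k * t))) * 1 :=
          mul_le_mul_of_nonneg_left hB1 hA0
      _ = 1 / (1 + (le / lBS) * Real.exp (k * t)) := mul_one _
      _ ≤ 1 / ((le / lBS) * Real.exp (k * t)) := by
          apply one_div_le_one_div_of_le (by positivity)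
          linarith
      _ = lBS / le * Real.exp (-k * t) := by
          rw [neg_mul, Real.exp_neg]
          field_simp
  -- limit of F at infinity
  have ha' : 0 < π * le * D₀ ^ 2 := by positivity
  have hb' : 0 < π * (le + lBS) * D₀ ^ 2 := by positivity
  have hexp0 : Tendsto (fun t : ℝ => Real.exp (-(k * t))) atTop (𝓝 0) := by
    apply Real.tendsto_exp_atBot.comp
    have : Tendsto (fun t : ℝ => k * t) atTop atTop :=
      Tendsto.const_mul_atTop hk tendsto_id
    exact tendsto_neg_atTop_atBot.comp this
  have hvtend : Tendsto v atTop (𝓝 (π * le * D₀ ^ 2)) := by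
    have h1 : Tendsto (fun t => π * (le + lBS * Real.exp (-(k * t))) * D₀ ^ 2) atTop
        (𝓝 (π * (le + lBS * 0) * D₀ ^ 2)) :=
      ((tendsto_const_nhds.add ((hexp0.const_mul lBS))).const_mul π).mul_const _
    simpa using h1
  have hFtend : Tendsto F atTop
      (𝓝 (-(α / (2 * Real.log 2)) *
        (Real.log (π * le * D₀ ^ 2) + expIntegralE1 (π * le * D₀ ^ 2)))) := by
    apply Tendsto.const_mul
    exact (((Real.continuousAt_log (ne_of_gt ha')).tendsto.comp hvtend).add
      ((E1_hasDerivAt ha').continuousAt.tendsto.comp hvtend))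
  rw [MeasureTheory.integral_Ioi_of_hasDerivAt_of_tendsto' hderiv hint hFtend]
  have hF0 : F 0 = -(α / (2 * Real.log 2)) *
      (Real.log (π * (le + lBS) * D₀ ^ 2) + expIntegralE1 (π * (le + lBS) * D₀ ^ 2)) := by
    rw [hF_def, hv_def]
    simp [Real.exp_zero, add_comm le lBS]
  rw [hF0]
  have hlogdiff : Real.log (π * (le + lBS) * D₀ ^ 2) - Real.log (π * le * D₀ ^ 2)
      = Real.log ((lBS + le) / le) := by
    have e1 : Real.log (π * (le + lBS) * D₀ ^ 2)
        = Real.log π + Real.log (le + lBS) + Real.log (D₀ ^ 2) := by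
      rw [Real.log_mul (by positivity) (by positivity),
        Real.log_mul (by positivity) (by positivity)]
    have e2 : Real.log (π * le * D₀ ^ 2)
        = Real.log π + Real.log le + Real.log (D₀ ^ 2) := by
      rw [Real.log_mul (by positivity) (by positivity),
        Real.log_mul (by positivity) (ne_of_gt he)]
    have e3 : Real.log ((lBS + le) / le) = Real.log (lBS + le) - Real.log le :=
      Real.log_div (by positivity) (ne_of_gt he)
    rw [e1, e2, e3, add_comm lBS le]
    ring
  linear_combination (α / (2 * Real.log 2)) * hlogdiff
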